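/- Let Φ ∈ ℝ^{M×N} satisfy the null space condition and have pairwise distinct columns (φ_n ≠ φ_{n'} for all n ≠ n' in {1,…,N}). Then there exists j ∈ {1,…,N} such that the one-hot collision set is trivial: C_{e_j} = {e_j}. -/

import Mathlib

open scoped BigOperators

/-- Collision set `C_u = {x ∈ ℤ₊^N : Φx = Φu}`. -/
def collisionSet {M N : ℕ} (Φ : Matrix (Fin M) (Fin N) ℝ) (u : Fin N → ℕ) :
    Set (Fin N → ℕ) :=
  {x | Φ.mulVec (fun n => (x n : ℝ)) = Φ.mulVec (fun n => (u n : ℝ))}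

lemma aux_sum_one {N : ℕ} (v : Fin N → ℕ) (h : ∑ n, v n = 1) :
    ∃ k, v = Pi.single k 1 := by
  obtain ⟨k, hk⟩ : ∃ k, v k ≠ 0 := by
    by_contra hc; push_neg at hc
    simp [hc] at h
  have h2 : v k + ∑ n ∈ Finset.univ.erase k, v n = 1 := by
    rw [Finset.add_sum_erase _ _ (Finset.mem_univ k)]; exact h
  have hvk : v k = 1 := by omega
  have hz : ∑ n ∈ Finset.univ.erase k, v n = 0 := by omega
  rw [Finset.sum_eq_zero_iff] at hz
  refine ⟨k, funext fun n => ?_⟩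
  by_cases hn : n = k
  · subst hn; simp [hvk]
  · simp [Pi.single_apply, hn, hz n (Finset.mem_erase.mpr ⟨hn, Finset.mem_univ n⟩)]

lemma aux_single_cast {M N : ℕ} (Φ : Matrix (Fin M) (Fin N) ℝ) (j : Fin N) :
    Φ.mulVec (fun n => ((Pi.single j 1 : Fin N → ℕ) n : ℝ)) = fun m => Φ m j := by
  have : (fun n => ((Pi.single j 1 : Fin N → ℕ) n : ℝ)) = Pi.single j (1:ℝ) := by
    funext n; by_cases h : n = j <;> simp [Pi.single_apply, h]
  rw [this]; funext m; simp [Matrix.mulVec_single]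

/-- under the null space condition and pairwise distinct columns,
some one-hot collision set is trivial. -/
theorem stmt_7 {M N : ℕ} (hN : 0 < N)
    (Φ : Matrix (Fin M) (Fin N) ℝ)
    (hns : ∀ v : Fin N → ℝ, (∀ n, 0 ≤ v n) → Φ.mulVec v = 0 → v = 0)
    (hcols : ∀ n n' : Fin N, n ≠ n' → (fun m => Φ m n) ≠ (fun m => Φ m n')) :
    ∃ j : Fin N, collisionSet Φ (Pi.single j 1) = {Pi.single j 1} := by
  by_contra hcon
  push_neg at hcon
  have hx : ∀ j : Fin N, ∃ x, x ∈ collisionSet Φ (Pi.single j 1) ∧ x ≠ Pi.single j 1 := by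
    intro j
    by_contra h
    push_neg at h
    apply hcon j
    apply Set.eq_singleton_iff_unique_mem.mpr
    exact ⟨rfl, h⟩
  choose x hxmem hxne using hx
  -- columns of the x's
  have hcolx : ∀ j, Φ.mulVec (fun n => ((x j) n : ℝ)) = fun m => Φ m j := by
    intro j
    have := hxmem j
    rw [collisionSet, Set.mem_setOf_eq] at this
    rw [this, aux_single_cast]
  -- each x j has mass ≥ 2
  have hmass : ∀ j, 2 ≤ ∑ n, x j n := by
    intro j
    rcases Nat.lt_or_ge (∑ n, x j n) 2 with h | h
    · interval_cases hs : (∑ n, x j n)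
      · -- sum zero: x j = 0, column j = 0, contradiction with hns on e_j
        exfalso
        have hx0 : ∀ n, x j n = 0 := by
          intro n
          have := Finset.sum_eq_zero_iff.mp hs n (Finset.mem_univ n)
          exact this
        have hc0 : (fun m => Φ m j) = 0 := by
          rw [← hcolx j]
          funext m
          simp [Matrix.mulVec, dotProduct, hx0]
        have := hns (Pi.single j (1:ℝ)) (by
          intro n; by_cases h : n = j <;> simp [Pi.single_apply, h])
          (by
            funext m
            have : Φ.mulVec (Pi.single j (1:ℝ)) m = Φ m j := by
              simp [Matrix.mulVec_single]
            rw [this]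
            have := congrFun hc0 m
            simpa using this)
        have := congrFun this j
        simp at this
      · -- sum one: x j = single k 1
        exfalso
        obtain ⟨k, hk⟩ := aux_sum_one (x j) hs
        by_cases hkj : k = j
        · exact hxne j (by rw [hk, hkj])
        · apply hcols j k (fun h => hkj h.symm)
          rw [← hcolx j, hk, aux_single_cast]
    · exact h
  -- the expansion map and iterated sequence
  have j0 : Fin N := ⟨0, hN⟩
  set F : (Fin N → ℕ) → (Fin N → ℕ) := fun v n => ∑ j, v j * x j n with hF
  set w : ℕ → (Fin N → ℕ) := fun k => F^[k] (Pi.single j0 1) with hw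
  have hwsucc : ∀ k, w (k+1) = F (w k) := by
    intro k; rw [hw]; exact Function.iterate_succ_apply' F k _
  -- invariant 1 : Φ (w k) = column j0
  have hinv1 : ∀ k, Φ.mulVec (fun n => ((w k) n : ℝ)) = fun m => Φ m j0 := by
    intro k
    induction k with
    | zero => exact aux_single_cast Φ j0
    | succ k ih =>
      rw [hwsucc k]
      funext m
      have : Φ.mulVec (fun n => ((F (w k)) n : ℝ)) m
          = ∑ j, ((w k) j : ℝ) * (Φ.mulVec (fun n => ((x j) n : ℝ)) m) := by
        simp only [Matrix.mulVec, dotProduct, hF]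
        push_cast
        simp only [Finset.mul_sum]
        rw [Finset.sum_comm]
        refine Finset.sum_congr rfl fun j _ => ?_
        exact Finset.sum_congr rfl fun n _ => by ring
      rw [this]
      have hcc : ∀ j : Fin N, Φ.mulVec (fun n => ((x j) n : ℝ)) m = Φ m j :=
        fun j => congrFun (hcolx j) m
      simp only [hcc]
      have ihm := congrFun ih m
      simp only [Matrix.mulVec, dotProduct] at ihm
      rw [← ihm]
      exact Finset.sum_congr rfl fun j _ => mul_comm _ _
  -- invariant 2 : mass grows like 2^k
  have hinv2 : ∀ k, 2^k ≤ ∑ n, w k n := by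
    intro k
    induction k with
    | zero => simp [hw, Finset.sum_pi_single']
    | succ k ih =>
      rw [hwsucc k]
      calc 2^(k+1) = 2^k * 2 := by ring
        _ ≤ (∑ n, w k n) * 2 := Nat.mul_le_mul_right 2 ih
        _ = ∑ j, w k j * 2 := by rw [Finset.sum_mul]
        _ ≤ ∑ j, w k j * ∑ n, x j n :=
            Finset.sum_le_sum fun j _ => Nat.mul_le_mul_left _ (hmass j)
        _ = ∑ j, ∑ n, w k j * x j n := by simp [Finset.mul_sum]
        _ = ∑ n, ∑ j, w k j * x j n := Finset.sum_comm
        _ = ∑ n, F (w k) n := rfl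
  -- compactness: minimum of ‖Φ v‖ on the standard simplex
  have hconts : Continuous fun v : Fin N → ℝ => ‖Φ.mulVec v‖ := by
    have h1 : Continuous fun v : Fin N → ℝ => Φ.mulVec v := by
      have := (Matrix.mulVecLin Φ).continuous_of_finiteDimensional
      exact this
    exact h1.norm
  have hSne : (stdSimplex ℝ (Fin N)).Nonempty := by
    refine ⟨Pi.single j0 1, fun n => ?_, ?_⟩
    · by_cases h : n = j0 <;> simp [Pi.single_apply, h]
    · simp [Finset.sum_pi_single']
  obtain ⟨vmin, hvmin, hmin⟩ :=
    (isCompact_stdSimplex ℝ (Fin N)).exists_isMinOn hSne hconts.continuousOn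
  have hcpos : 0 < ‖Φ.mulVec vmin‖ := by
    rcases (norm_nonneg (Φ.mulVec vmin)).lt_or_eq with h | h
    · exact h
    · exfalso
      have h0 : Φ.mulVec vmin = 0 := by rwa [eq_comm, norm_eq_zero] at h
      have hv0 := hns vmin hvmin.1 h0
      have hs := hvmin.2
      rw [hv0] at hs
      simp at hs
  -- pick k large
  obtain ⟨k, hk⟩ := pow_unbounded_of_one_lt
    (‖(fun m => Φ m j0 : Fin M → ℝ)‖ / ‖Φ.mulVec vmin‖) (one_lt_two (α := ℝ))
  set s : ℝ := ∑ n, ((w k n : ℕ) : ℝ) with hsdef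
  have hs2 : (2:ℝ)^k ≤ s := by
    have := hinv2 k
    rw [hsdef]
    exact_mod_cast this
  have hspos : 0 < s := lt_of_lt_of_le (by positivity) hs2
  set u : Fin N → ℝ := fun n => (w k n : ℝ) / s with hu
  have humem : u ∈ stdSimplex ℝ (Fin N) := by
    refine ⟨fun n => div_nonneg (Nat.cast_nonneg _) hspos.le, ?_⟩
    rw [hu]
    simp only
    rw [← Finset.sum_div, ← hsdef, div_self hspos.ne']
  have hle := hmin humem
  have hmul : Φ.mulVec u = s⁻¹ • (fun m => Φ m j0) := by
    have h1 : u = s⁻¹ • (fun n => ((w k n : ℕ) : ℝ)) := by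
      funext n; simp [hu, div_eq_inv_mul]
    rw [h1, Matrix.mulVec_smul, hinv1 k]
  have hnorm : ‖Φ.mulVec u‖ = ‖(fun m => Φ m j0 : Fin M → ℝ)‖ / s := by
    rw [hmul, norm_smul, norm_inv, Real.norm_eq_abs, abs_of_pos hspos, div_eq_inv_mul]
  have hle2 : ‖Φ.mulVec vmin‖ ≤ ‖(fun m => Φ m j0 : Fin M → ℝ)‖ / s := by
    rw [← hnorm]; exact hle
  have hfin : ‖Φ.mulVec vmin‖ * 2^k ≤ ‖(fun m => Φ m j0 : Fin M → ℝ)‖ := by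
    calc ‖Φ.mulVec vmin‖ * 2^k ≤ ‖Φ.mulVec vmin‖ * s :=
          mul_le_mul_of_nonneg_left hs2 hcpos.le
      _ ≤ (‖(fun m => Φ m j0 : Fin M → ℝ)‖ / s) * s :=
          mul_le_mul_of_nonneg_right hle2 hspos.le
      _ = ‖(fun m => Φ m j0 : Fin M → ℝ)‖ := div_mul_cancel₀ _ hspos.ne'
  rw [div_lt_iff₀ hcpos, mul_comm] at hk
  exact absurd hfin (not_le.mpr hk)
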